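/- Let q: ℝ × (−ε,ε) → ℝ be continuous, T-periodic in t, and satisfy q(t,−e) = q(t + T/2, e) for all t and e. Let Δ(e) denote the discriminant (trace of the monodromy matrix over one period T) of the Hill equation ÿ + q(t,e)y = 0. Then Δ(−e) = Δ(e) for all e ∈ (−ε,ε). -/

import Mathlib

open Set

lemma lip_aux (c : ℝ → ℝ) (C : ℝ) (hC : ∀ t, |c t| ≤ C) (t : ℝ) :
    LipschitzWith (Real.toNNReal (max 1 C)) (fun x : ℝ × ℝ => (x.2, -(c t) * x.1)) := by
  have hC0 : (0:ℝ) ≤ C := le_trans (abs_nonneg _) (hC 0)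
  apply LipschitzWith.of_dist_le_mul
  intro x y
  rw [Prod.dist_eq, Real.coe_toNNReal _ (by positivity)]
  have h1 : dist x.2 y.2 ≤ dist x y := by rw [Prod.dist_eq]; exact le_max_right _ _
  have h2 : dist x.1 y.1 ≤ dist x y := by rw [Prod.dist_eq]; exact le_max_left _ _
  have hd : dist (-(c t) * x.1) (-(c t) * y.1) = |c t| * dist x.1 y.1 := by
    have h : -(c t) * x.1 - -(c t) * y.1 = -(c t * (x.1 - y.1)) := by ring
    rw [Real.dist_eq, Real.dist_eq, h, abs_neg, abs_mul]
  apply max_le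
  · calc dist x.2 y.2 ≤ 1 * dist x y := by linarith
    _ ≤ max 1 C * dist x y := by
        apply mul_le_mul_of_nonneg_right (le_max_left _ _) dist_nonneg
  · rw [hd]
    calc |c t| * dist x.1 y.1 ≤ C * dist x y := by
          apply mul_le_mul (hC t) h2 dist_nonneg hC0
    _ ≤ max 1 C * dist x y := by
        apply mul_le_mul_of_nonneg_right (le_max_right _ _) dist_nonneg

lemma ode_unique_global {v : ℝ → (ℝ × ℝ) → (ℝ × ℝ)} {K : NNReal}
    (hv : ∀ t, LipschitzWith K (v t))
    {f g : ℝ → ℝ × ℝ}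
    (hf : ∀ t, HasDerivAt f (v t (f t)) t)
    (hg : ∀ t, HasDerivAt g (v t (g t)) t)
    (h0 : f 0 = g 0) : ∀ t, f t = g t := by
  intro t
  have ht0 : (0:ℝ) ∈ Ioo (-(|t|+1)) (|t|+1) := by
    constructor <;> [nlinarith [abs_nonneg t]; nlinarith [abs_nonneg t]]
  have htt : t ∈ Ioo (-(|t|+1)) (|t|+1) := by
    constructor <;> [nlinarith [neg_abs_le t]; nlinarith [le_abs_self t]]
  exact ODE_solution_unique_of_mem_Ioo (s := fun _ => Set.univ)
    (fun t _ => (hv t).lipschitzOnWith) ht0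
    (fun s _ => ⟨hf s, trivial⟩) (fun s _ => ⟨hg s, trivial⟩) h0 htt

lemma hill_repr (c : ℝ → ℝ) (C : ℝ) (hC : ∀ t, |c t| ≤ C)
    (Y₁ Y₂ Y₁' Y₂' : ℝ → ℝ)
    (h1 : ∀ t, HasDerivAt Y₁ (Y₁' t) t) (h2 : ∀ t, HasDerivAt Y₂ (Y₂' t) t)
    (h1' : ∀ t, HasDerivAt Y₁' (-(c t) * Y₁ t) t)
    (h2' : ∀ t, HasDerivAt Y₂' (-(c t) * Y₂ t) t)
    (i1 : Y₁ 0 = 1) (i2 : Y₂' 0 = 1) (i3 : Y₁' 0 = 0) (i4 : Y₂ 0 = 0)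
    (z : ℝ → ℝ × ℝ)
    (hz1 : ∀ t, HasDerivAt (fun s => (z s).1) (z t).2 t)
    (hz2 : ∀ t, HasDerivAt (fun s => (z s).2) (-(c t) * (z t).1) t) :
    ∀ t, (z t).1 = (z 0).1 * Y₁ t + (z 0).2 * Y₂ t ∧
         (z t).2 = (z 0).1 * Y₁' t + (z 0).2 * Y₂' t := by
  set v : ℝ → (ℝ × ℝ) → (ℝ × ℝ) := fun t x => (x.2, -(c t) * x.1) with hv
  set g : ℝ → ℝ × ℝ :=
    fun t => ((z 0).1 * Y₁ t + (z 0).2 * Y₂ t, (z 0).1 * Y₁' t + (z 0).2 * Y₂' t) with hg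
  have hzd : ∀ t, HasDerivAt z (v t (z t)) t := by
    intro t
    exact (hz1 t).prodMk (hz2 t)
  have hgd : ∀ t, HasDerivAt g (v t (g t)) t := by
    intro t
    have d1 : HasDerivAt (fun t => (z 0).1 * Y₁ t + (z 0).2 * Y₂ t)
        ((z 0).1 * Y₁' t + (z 0).2 * Y₂' t) t :=
      ((h1 t).const_mul _).add ((h2 t).const_mul _)
    have d2 : HasDerivAt (fun t => (z 0).1 * Y₁' t + (z 0).2 * Y₂' t)
        (-(c t) * ((z 0).1 * Y₁ t + (z 0).2 * Y₂ t)) t := by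
      have := ((h1' t).const_mul ((z 0).1)).add ((h2' t).const_mul ((z 0).2))
      exact this.congr_deriv (by ring)
    exact d1.prodMk d2
  have h0 : z 0 = g 0 := by
    simp only [hg, i1, i2, i3, i4]
    ext <;> simp
  have := ode_unique_global (lip_aux c C hC) hzd hgd h0
  intro t
  rw [this t]
  exact ⟨rfl, rfl⟩


/-- Parity of the Hill discriminant: if q(t,−e) = q(t+T/2,e) then Δ(−e) = Δ(e). -/
theorem stmt14 (T ε : ℝ) (hT : 0 < T) (hε : 0 < ε)
    (q : ℝ → ℝ → ℝ)
    (hqcont : Continuous (fun p : ℝ × ℝ => q p.1 p.2))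
    (hqper : ∀ t e : ℝ, q (t + T) e = q t e)
    (hqsym : ∀ t e : ℝ, q t (-e) = q (t + T/2) e)
    (y₁ y₂ y₁' y₂' : ℝ → ℝ → ℝ)
    (hode : ∀ e ∈ Set.Ioo (-ε) ε, ∀ t : ℝ,
      HasDerivAt (fun s => y₁ s e) (y₁' t e) t ∧
      HasDerivAt (fun s => y₂ s e) (y₂' t e) t ∧
      HasDerivAt (fun s => y₁' s e) (-(q t e) * y₁ t e) t ∧
      HasDerivAt (fun s => y₂' s e) (-(q t e) * y₂ t e) t)
    (hinit : ∀ e ∈ Set.Ioo (-ε) ε,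
      y₁ 0 e = 1 ∧ y₂' 0 e = 1 ∧ y₁' 0 e = 0 ∧ y₂ 0 e = 0) :
    ∀ e ∈ Set.Ioo (-ε) ε, y₁ T (-e) + y₂' T (-e) = y₁ T e + y₂' T e := by
  intro e he
  have hne : -e ∈ Set.Ioo (-ε) ε := by
    constructor
    · linarith [he.2]
    · linarith [he.1]
  -- bound on the coefficient
  have hcont : Continuous (fun t => q t e) :=
    hqcont.comp (continuous_id.prodMk continuous_const)
  obtain ⟨C, hCb⟩ : ∃ C, ∀ t ∈ Icc (0:ℝ) T, |q t e| ≤ C := by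
    obtain ⟨C, hC⟩ := (isCompact_Icc (a := (0:ℝ)) (b := T)).exists_bound_of_continuousOn
      (hcont.continuousOn)
    exact ⟨C, fun t ht => by simpa using hC t ht⟩
  have hper : Function.Periodic (fun t => q t e) T := fun t => hqper t e
  have hCe : ∀ t, |q t e| ≤ C := by
    intro t
    obtain ⟨s, hs, hts⟩ := hper.exists_mem_Ico₀ hT t
    rw [hts]
    exact hCb s ⟨hs.1, hs.2.le⟩
  have hCne : ∀ t, |q t (-e)| ≤ C := by
    intro t
    rw [hqsym]
    exact hCe _
  -- shorthand
  obtain ⟨i1, i2, i3, i4⟩ := hinit e he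
  obtain ⟨j1, j2, j3, j4⟩ := hinit (-e) hne
  have He := hode e he
  have Hne := hode (-e) hne
  -- canonical solutions at parameter e
  have e1 : ∀ t, HasDerivAt (fun s => y₁ s e) (y₁' t e) t := fun t => (He t).1
  have e2 : ∀ t, HasDerivAt (fun s => y₂ s e) (y₂' t e) t := fun t => (He t).2.1
  have e3 : ∀ t, HasDerivAt (fun s => y₁' s e) (-(q t e) * y₁ t e) t := fun t => (He t).2.2.1
  have e4 : ∀ t, HasDerivAt (fun s => y₂' s e) (-(q t e) * y₂ t e) t := fun t => (He t).2.2.2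
  have f1 : ∀ t, HasDerivAt (fun s => y₁ s (-e)) (y₁' t (-e)) t := fun t => (Hne t).1
  have f2 : ∀ t, HasDerivAt (fun s => y₂ s (-e)) (y₂' t (-e)) t := fun t => (Hne t).2.1
  have f3 : ∀ t, HasDerivAt (fun s => y₁' s (-e)) (-(q t (-e)) * y₁ t (-e)) t :=
    fun t => (Hne t).2.2.1
  have f4 : ∀ t, HasDerivAt (fun s => y₂' s (-e)) (-(q t (-e)) * y₂ t (-e)) t :=
    fun t => (Hne t).2.2.2
  -- shifted solutions: shift by r turns a solution of param e into sth
  have shift1 : ∀ (Y Y' : ℝ → ℝ) (r : ℝ),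
      (∀ t, HasDerivAt Y (Y' t) t) → ∀ t, HasDerivAt (fun s => Y (s + r)) (Y' (t + r)) t := by
    intro Y Y' r hY t
    have := (hY (t + r)).comp t ((hasDerivAt_id t).add_const r)
    exact this.congr_deriv (by simp)
  -- (i),(ii): T-shift of param-e solutions, represented in param-e basis
  have repr_shiftT : ∀ (Y Y' : ℝ → ℝ),
      (∀ t, HasDerivAt Y (Y' t) t) →
      (∀ t, HasDerivAt Y' (-(q t e) * Y t) t) →
      ∀ t, Y (t + T) = Y T * y₁ t e + Y' T * y₂ t e ∧
           Y' (t + T) = Y T * y₁' t e + Y' T * y₂' t e := by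
    intro Y Y' hY hY'
    have := hill_repr (fun t => q t e) C hCe (fun t => y₁ t e) (fun t => y₂ t e)
      (fun t => y₁' t e) (fun t => y₂' t e) e1 e2 e3 e4 i1 i2 i3 i4
      (fun t => (Y (t + T), Y' (t + T)))
      (fun t => shift1 Y Y' T hY t)
      (fun t => by
        have := shift1 Y' (fun s => -(q s e) * Y s) T hY' t
        simpa [hqper t e] using this)
    intro t
    simpa using this t
  -- (iii),(iv): T/2-shift of param-e solutions solve the param-(-e) equation
  have repr_shift2 : ∀ (Y Y' : ℝ → ℝ),
      (∀ t, HasDerivAt Y (Y' t) t) →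
      (∀ t, HasDerivAt Y' (-(q t e) * Y t) t) →
      ∀ t, Y (t + T/2) = Y (T/2) * y₁ t (-e) + Y' (T/2) * y₂ t (-e) ∧
           Y' (t + T/2) = Y (T/2) * y₁' t (-e) + Y' (T/2) * y₂' t (-e) := by
    intro Y Y' hY hY'
    have := hill_repr (fun t => q t (-e)) C hCne (fun t => y₁ t (-e)) (fun t => y₂ t (-e))
      (fun t => y₁' t (-e)) (fun t => y₂' t (-e)) f1 f2 f3 f4 j1 j2 j3 j4
      (fun t => (Y (t + T/2), Y' (t + T/2)))
      (fun t => shift1 Y Y' (T/2) hY t)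
      (fun t => by
        have := shift1 Y' (fun s => -(q s e) * Y s) (T/2) hY' t
        simpa [hqsym t e] using this)
    intro t
    simpa using this t
  -- Wronskian is constant equal to 1
  have hWconst : y₁ (T/2) e * y₂' (T/2) e - y₂ (T/2) e * y₁' (T/2) e = 1 := by
    set W : ℝ → ℝ := fun t => y₁ t e * y₂' t e - y₂ t e * y₁' t e with hW
    have hWd : ∀ t, HasDerivAt W 0 t := by
      intro t
      have := (((e1 t).mul (e4 t)).sub ((e2 t).mul (e3 t)))
      exact this.congr_deriv (by ring)
    have hdiff : Differentiable ℝ W := fun t => (hWd t).differentiableAt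
    have hzero : ∀ t, deriv W t = 0 := fun t => (hWd t).deriv
    have : W (T/2) = W 0 := by
      have := is_const_of_deriv_eq_zero hdiff hzero (T/2) 0
      exact this
    rw [hW] at this
    simp only at this
    rw [this, i1, i2, i3, i4]
    ring
  -- collect the four matrix relations
  have R1 := repr_shiftT (fun t => y₁ t e) (fun t => y₁' t e) e1 e3 (T/2)
  have R2 := repr_shiftT (fun t => y₂ t e) (fun t => y₂' t e) e2 e4 (T/2)
  have S1 := repr_shift2 (fun t => y₁ t e) (fun t => y₁' t e) e1 e3 T
  have S2 := repr_shift2 (fun t => y₂ t e) (fun t => y₂' t e) e2 e4 T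
  have hcomm : T/2 + T = T + T/2 := by ring
  rw [hcomm] at R1 R2
  obtain ⟨R1a, R1b⟩ := R1
  obtain ⟨R2a, R2b⟩ := R2
  obtain ⟨S1a, S1b⟩ := S1
  obtain ⟨S2a, S2b⟩ := S2
  rw [S1a] at R1a
  rw [S1b] at R1b
  rw [S2a] at R2a
  rw [S2b] at R2b
  linear_combination y₂' (T/2) e * R1a - y₁' (T/2) e * R2a - y₂ (T/2) e * R1b
    + y₁ (T/2) e * R2b
    + (y₁ T e + y₂' T e - y₁ T (-e) - y₂' T (-e)) * hWconst
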